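/- Let M be a subset of a real normed space X and S, T : X → X self-mappings such that u ∈ Fix(S) ∩ Fix(T) for some u ∈ X and T(∂M ∩ M) ⊆ M. Assume S(P_M(u)) = P_M(u), P_M(u) is closed and q-starshaped with q ∈ Fix(S), the pair (S,T) is a generalized JH-suboperator pair with order n₀ on P_M(u), and for all x, y ∈ P_M(u) ∪ {u}: if y = u then ψ(∫₀^{‖Tx−Ty‖} φ(t)dt) ≤ F(ψ(∫₀^{‖Sx−Sy‖} φ(t)dt), φᵤ(∫₀^{‖Sx−Sy‖} φ(t)dt)), and if y ∈ P_M(u) then for each k ∈ (0,1), ψ(∫₀^{‖Tx−Ty‖} φ(t)dt) ≤ F(ψ(∫₀^{(1/k)γ(m₃(x,y))} φ(t)dt), φᵤ(∫₀^{(1/k)γ(m₃(x,y))} φ(t)dt)), where ψ is an altering distance function, φᵤ is an ultra altering distance function, F is a C-class function, and the triple (ψ, φᵤ, F) is monotone. If P_M(u) is bounded and complete, T is hemicompact, and S is continuous, then P_M(u) ∩ Fix(S) ∩ Fix(T) ≠ ∅. -/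

import Mathlib

open MeasureTheory Filter Topology Set

noncomputable section

/-- The integral `∫₀^a φ(t) dt`. -/
def intPhi (phi : ℝ → ℝ) (a : ℝ) : ℝ := ∫ t in (0:ℝ)..a, phi t

/-- `φ : [0,∞) → [0,∞)` is Lebesgue integrable, summable, nonnegative, with
`∫₀^ε φ(t)dt > 0` for all `ε > 0`. -/
def PhiAdmissible (phi : ℝ → ℝ) : Prop :=
  (∀ t ≥ (0:ℝ), 0 ≤ phi t) ∧ (∀ b : ℝ, IntervalIntegrable phi volume 0 b) ∧
  ∀ ε > (0:ℝ), 0 < intPhi phi ε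

/-- Altering distance function: nondecreasing, continuous, `ψ t = 0 ↔ t = 0` on `[0,∞)`. -/
def AlteringDistance (ψ : ℝ → ℝ) : Prop :=
  MonotoneOn ψ (Ici 0) ∧ ContinuousOn ψ (Ici 0) ∧ ∀ t ≥ (0:ℝ), (ψ t = 0 ↔ t = 0)

/-- Ultra altering distance function: continuous, nondecreasing, positive on `(0,∞)`,
nonnegative at `0`. -/
def UltraAltering (φu : ℝ → ℝ) : Prop :=
  ContinuousOn φu (Ici 0) ∧ MonotoneOn φu (Ici 0) ∧ (∀ t > (0:ℝ), 0 < φu t) ∧ 0 ≤ φu 0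

/-- C-class function: continuous on `[0,∞)²`, `F s t ≤ s`, and `F s t = s → s = 0 ∨ t = 0`. -/
def CClassFun (F : ℝ → ℝ → ℝ) : Prop :=
  ContinuousOn (Function.uncurry F) (Ici 0 ×ˢ Ici 0) ∧
  (∀ s ≥ (0:ℝ), ∀ t ≥ (0:ℝ), F s t ≤ s) ∧
  (∀ s ≥ (0:ℝ), ∀ t ≥ (0:ℝ), F s t = s → s = 0 ∨ t = 0)

/-- The triple `(ψ, φᵤ, F)` is monotone. -/
def MonotoneTriple (ψ φu : ℝ → ℝ) (F : ℝ → ℝ → ℝ) : Prop :=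
  ∀ x y : ℝ, 0 ≤ x → x ≤ y → F (ψ x) (φu x) ≤ F (ψ y) (φu y)

/-- The triple `(ψ, φᵤ, F)` is strictly monotone. -/
def StrictMonotoneTriple (ψ φu : ℝ → ℝ) (F : ℝ → ℝ → ℝ) : Prop :=
  ∀ x y : ℝ, 0 ≤ x → x < y → F (ψ x) (φu x) < F (ψ y) (φu y)

/-- `γ : (0,∞) → (0,∞)` is nondecreasing with `γ t < t` for all `t > 0`. -/
def GammaAdmissible (γ : ℝ → ℝ) : Prop :=
  (∀ t > (0:ℝ), 0 < γ t) ∧ MonotoneOn γ (Ioi 0) ∧ ∀ t > (0:ℝ), γ t < t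

variable {X : Type*} [NormedAddCommGroup X] [NormedSpace ℝ X]

/-- Fixed points of `T` lying in `M`. -/
def FixOn (T : X → X) (M : Set X) : Set X := {x ∈ M | T x = x}

/-- Points of coincidence `PC(S,T)` of the pair `(S,T)` over the set `M`. -/
def PCset (S T : X → X) (M : Set X) : Set X := {w | ∃ x ∈ M, S x = w ∧ T x = w}

/-- `(S,T)` is a generalized JH-operator pair with order `n` on `M`:
there is `x ∈ M` and `w = Sx = Tx ∈ PC(S,T)` with `‖w - x‖ ≤ (δ(PC(S,T)))ⁿ`. -/
def GenJHOp (S T : X → X) (M : Set X) (n : ℕ) : Prop :=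
  ∃ x ∈ M, S x = T x ∧ ‖S x - x‖ ≤ Metric.diam (PCset S T M) ^ n

/-- `(S,T)` is a generalized JH-suboperator pair with order `n` on `M` (w.r.t. `q`):
for each `k ∈ [0,1]`, `(S, T_k)` with `T_k x = (1-k)q + kTx` is a generalized JH-operator
pair with order `n`. -/
def GenJHSubOp (S T : X → X) (M : Set X) (q : X) (n : ℕ) : Prop :=
  ∀ k ∈ Icc (0:ℝ) 1, GenJHOp S (fun x => (1 - k) • q + k • T x) M n

/-- `M` is `q`-starshaped. -/
def Starshaped (M : Set X) (q : X) : Prop :=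
  q ∈ M ∧ ∀ x ∈ M, segment ℝ q x ⊆ M

def m1 (S T : X → X) (x y : X) : ℝ :=
  max (max ‖S x - S y‖ ‖S x - T x‖)
    (max ‖S y - T y‖ ((‖T x - T y‖ + ‖S y - T x‖) / 2))

def n1 (S T : X → X) (x y : X) : ℝ :=
  max ‖S x - S y‖ (max ‖T x - S x‖ ‖S y - T y‖)

def m2 (S T : X → X) (x y : X) : ℝ :=
  max (max ‖S x - S y‖ ‖S x - T x‖)
    (max ‖S y - T y‖ ((‖S x - T y‖ + ‖S y - T x‖) / 2))

def m3 (S T : X → X) (q x y : X) : ℝ :=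
  max (max ‖S x - S y‖ (Metric.infDist (S x) (segment ℝ q (T x))))
    (max (Metric.infDist (S y) (segment ℝ q (T y)))
      ((Metric.infDist (S x) (segment ℝ q (T y)) +
        Metric.infDist (S y) (segment ℝ q (T x))) / 2))

/-- `Y^{a} = {f_a(k) : k ∈ [0,1]}` for a family `f`. -/
def Yfam (f : X → ℝ → X) (a : X) : Set X := f a '' Icc (0:ℝ) 1

def m4 (f : X → ℝ → X) (S T : X → X) (x y : X) : ℝ :=
  max (max ‖S x - S y‖ (Metric.infDist (S x) (Yfam f (T x))))
    (max (Metric.infDist (S y) (Yfam f (T y)))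
      ((Metric.infDist (S x) (Yfam f (T y)) +
        Metric.infDist (S y) (Yfam f (T x))) / 2))

/-- `ℑ = {f_α}_{α ∈ M}` is a family of functions `[0,1] → M` with `f_α(1) = α`. -/
def FamilyOn (f : X → ℝ → X) (M : Set X) : Prop :=
  (∀ a ∈ M, ∀ t ∈ Icc (0:ℝ) 1, f a t ∈ M) ∧ ∀ a ∈ M, f a 1 = a

/-- The family is contractive with contractiveness function `Φ : (0,1) → (0,1)`. -/
def ContractiveFamily (f : X → ℝ → X) (M : Set X) (Phi : ℝ → ℝ) : Prop :=
  (∀ t ∈ Ioo (0:ℝ) 1, Phi t ∈ Ioo (0:ℝ) 1) ∧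
  ∀ a ∈ M, ∀ b ∈ M, ∀ t ∈ Ioo (0:ℝ) 1, ‖f a t - f b t‖ ≤ Phi t * ‖a - b‖

/-- The family is jointly continuous: `tₙ → t₀` and `αₙ → α₀` imply
`f_{αₙ}(tₙ) → f_{α₀}(t₀)`. -/
def JointlyContinuousFamily (f : X → ℝ → X) (M : Set X) : Prop :=
  ∀ (tn : ℕ → ℝ) (t0 : ℝ), (∀ n, tn n ∈ Icc (0:ℝ) 1) → t0 ∈ Icc (0:ℝ) 1 →
    Tendsto tn atTop (𝓝 t0) →
    ∀ (an : ℕ → X) (a0 : X), (∀ n, an n ∈ M) → a0 ∈ M →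
      Tendsto an atTop (𝓝 a0) →
      Tendsto (fun n => f (an n) (tn n)) atTop (𝓝 (f a0 t0))

/-- `(S,T)` is a generalized JHℑ-suboperator pair with order `n` on `M`:
for each `k ∈ [0,1]`, `(S, T_k)` with `T_k x = f_{Tx}(k)` is a generalized
JH-operator pair with order `n`. -/
def GenJHImSubOp (f : X → ℝ → X) (S T : X → X) (M : Set X) (n : ℕ) : Prop :=
  ∀ k ∈ Icc (0:ℝ) 1, GenJHOp S (fun x => f (T x) k) M n

/-- Weak convergence of a sequence. -/
def WeakTendsTo (x : ℕ → X) (a : X) : Prop :=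
  ∀ f : StrongDual ℝ X, Tendsto (fun n => f (x n)) atTop (𝓝 (f a))

/-- Weak (sequential) closure. -/
def WSeqCl (A : Set X) : Set X := {a | ∃ x : ℕ → X, (∀ n, x n ∈ A) ∧ WeakTendsTo x a}

/-- Weak (sequential) compactness. -/
def WSeqCompact (A : Set X) : Prop :=
  ∀ x : ℕ → X, (∀ n, x n ∈ A) →
    ∃ a ∈ A, ∃ g : ℕ → ℕ, StrictMono g ∧ WeakTendsTo (x ∘ g) a

/-- `T` is completely continuous on `M`: weak convergence implies strong
convergence of images. -/
def CompletelyContinuousOn (T : X → X) (M : Set X) : Prop :=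
  ∀ (x : ℕ → X) (a : X), (∀ n, x n ∈ M) → a ∈ M → WeakTendsTo x a →
    Tendsto (fun n => T (x n)) atTop (𝓝 (T a))

/-- `S` is weakly continuous on `M`. -/
def WeaklyContinuousOn (S : X → X) (M : Set X) : Prop :=
  ∀ (x : ℕ → X) (a : X), (∀ n, x n ∈ M) → a ∈ M → WeakTendsTo x a →
    WeakTendsTo (fun n => S (x n)) (S a)

/-- `G` is demiclosed at `0` on `M`. -/
def DemiclosedAtZero (G : X → X) (M : Set X) : Prop :=
  ∀ (x : ℕ → X) (a : X), (∀ n, x n ∈ M) → a ∈ M → WeakTendsTo x a →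
    Tendsto (fun n => G (x n)) atTop (𝓝 (0 : X)) → G a = 0

/-- `T` is hemicompact on `M`. -/
def Hemicompact (T : X → X) (M : Set X) : Prop :=
  ∀ x : ℕ → X, (∀ n, x n ∈ M) →
    Tendsto (fun n => ‖x n - T (x n)‖) atTop (𝓝 (0 : ℝ)) →
    ∃ (a : X) (g : ℕ → ℕ), StrictMono g ∧ Tendsto (x ∘ g) atTop (𝓝 a)

/-- Opial's condition. -/
def OpialCondition (Y : Type*) [NormedAddCommGroup Y] [NormedSpace ℝ Y] : Prop :=
  ∀ (x : ℕ → Y) (a : Y), WeakTendsTo x a → ∀ y : Y, y ≠ a →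
    liminf (fun n => ‖x n - a‖) atTop < liminf (fun n => ‖x n - y‖) atTop

/-- `P_M(u)`, the set of best approximations to `u` out of `M`. -/
def PMset (M : Set X) (u : X) : Set X := {x ∈ M | ‖x - u‖ = Metric.infDist u M}

/-- `C_M^S(u) = {x ∈ M : Sx ∈ P_M(u)}`. -/
def CMSset (M : Set X) (S : X → X) (u : X) : Set X := {x ∈ M | S x ∈ PMset M u}


lemma intPhi_nonneg' {phi : ℝ → ℝ} (hphi : PhiAdmissible phi) {a : ℝ} (ha : 0 ≤ a) :
    0 ≤ intPhi phi a :=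
  intervalIntegral.integral_nonneg ha (fun t ht => hphi.1 t ht.1)

lemma intPhi_mono' {phi : ℝ → ℝ} (hphi : PhiAdmissible phi) {a b : ℝ} (ha : 0 ≤ a)
    (hab : a ≤ b) : intPhi phi a ≤ intPhi phi b := by
  have h1 : IntervalIntegrable phi volume 0 a := hphi.2.1 a
  have h2 : IntervalIntegrable phi volume a b := (hphi.2.1 a).symm.trans (hphi.2.1 b)
  have hadd := intervalIntegral.integral_add_adjacent_intervals h1 h2
  have hnn : 0 ≤ ∫ t in a..b, phi t :=
    intervalIntegral.integral_nonneg hab (fun t ht => hphi.1 t (le_trans ha ht.1))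
  unfold intPhi
  linarith

theorem stmt_15 {X : Type*} [NormedAddCommGroup X] [NormedSpace ℝ X]
    (M : Set X) (S T : X → X) (u : X) (hSu : S u = u) (hTu : T u = u)
    (hTbd : T '' (frontier M ∩ M) ⊆ M)
    (hSPM : S '' PMset M u = PMset M u)
    (hPMcl : IsClosed (PMset M u))
    (q : X) (hstar : Starshaped (PMset M u) q) (hq : S q = q)
    (phi ψ φu : ℝ → ℝ) (F : ℝ → ℝ → ℝ)
    (hphi : PhiAdmissible phi) (hψ : AlteringDistance ψ) (hφu : UltraAltering φu)
    (hF : CClassFun F) (hmono : MonotoneTriple ψ φu F)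
    (γ : ℝ → ℝ) (hγ : GammaAdmissible γ)
    (n₀ : ℕ) (hn₀ : 1 ≤ n₀) (hJH : GenJHSubOp S T (PMset M u) q n₀)
    (hcontr : ∀ x ∈ PMset M u ∪ {u}, ∀ y ∈ PMset M u ∪ {u},
      (y = u →
        ψ (intPhi phi ‖T x - T y‖) ≤
          F (ψ (intPhi phi ‖S x - S y‖)) (φu (intPhi phi ‖S x - S y‖))) ∧
      (y ∈ PMset M u → ∀ k ∈ Ioo (0:ℝ) 1,
        ψ (intPhi phi ‖T x - T y‖) ≤
          F (ψ (intPhi phi ((1 / k) * γ (m3 S T q x y))))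
            (φu (intPhi phi ((1 / k) * γ (m3 S T q x y))))))
    (hPMb : Bornology.IsBounded (PMset M u)) (hPMc : IsComplete (PMset M u))
    (hTh : Hemicompact T (PMset M u)) (hScont : ContinuousOn S (PMset M u)) :
    ∃ x ∈ PMset M u, S x = x ∧ T x = x := by
  classical
  set P := PMset M u with hPdef
  have hqP : q ∈ P := hstar.1
  obtain ⟨C, hC⟩ := Metric.isBounded_iff.mp hPMb
  have hC0 : 0 ≤ C := le_trans dist_nonneg (hC hqP hqP)
  -- basic facts about ψ and the integral
  have hψ0 : ψ 0 = 0 := (hψ.2.2 0 le_rfl).mpr rfl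
  have hψmono : ∀ s t : ℝ, 0 ≤ s → s ≤ t → ψ (intPhi phi s) ≤ ψ (intPhi phi t) := by
    intro s t hs hst
    exact hψ.1 (Set.mem_Ici.mpr (intPhi_nonneg' hphi hs))
      (Set.mem_Ici.mpr (intPhi_nonneg' hphi (hs.trans hst)))
      (intPhi_mono' hphi hs hst)
  have keyF : ∀ b : ℝ, 0 < b →
      F (ψ (intPhi phi b)) (φu (intPhi phi b)) < ψ (intPhi phi b) := by
    intro b hb
    have hI : 0 < intPhi phi b := hphi.2.2 b hb
    have hs0 : 0 ≤ ψ (intPhi phi b) := by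
      have := hψ.1 (Set.mem_Ici.mpr le_rfl) (Set.mem_Ici.mpr hI.le) hI.le
      linarith [hψ0]
    have hsne : ψ (intPhi phi b) ≠ 0 := fun h => hI.ne' ((hψ.2.2 _ hI.le).mp h)
    have ht : 0 < φu (intPhi phi b) := hφu.2.2.1 _ hI
    have hle := hF.2.1 _ hs0 _ ht.le
    rcases eq_or_lt_of_le hle with heq | hlt
    · rcases hF.2.2 _ hs0 _ ht.le heq with h | h
      · exact absurd h hsne
      · exact absurd h ht.ne'
    · exact hlt
  have driver : ∀ β t : ℝ, 0 < β → β ≤ t →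
      ψ (intPhi phi t) ≤ F (ψ (intPhi phi β)) (φu (intPhi phi β)) → False := by
    intro β t hβ hβt hle
    have h1 := keyF β hβ
    have h2 := hψmono β t hβ.le hβt
    linarith
  -- each coincidence set for T_k, k ∈ (0,1), is a singleton
  have hsub : ∀ k, k ∈ Ioo (0:ℝ) 1 →
      (PCset S (fun z => (1-k) • q + k • T z) P).Subsingleton := by
    rintro k hk w1 hw1 w2 hw2
    by_contra hne
    obtain ⟨x, hx, hSx, hTx⟩ := hw1
    obtain ⟨y, hy, hSy, hTy⟩ := hw2
    have hTx' : (1-k) • q + k • T x = w1 := hTx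
    have hTy' : (1-k) • q + k • T y = w2 := hTy
    set D := ‖w1 - w2‖ with hDdef
    have hD0 : 0 < D := by
      rw [hDdef, norm_pos_iff]
      exact sub_ne_zero.mpr hne
    have hkpos := hk.1
    have hTxy : w1 - w2 = k • (T x - T y) := by rw [← hTx', ← hTy']; module
    have hnorm : ‖T x - T y‖ = D / k := by
      have h1 : D = k * ‖T x - T y‖ := by
        rw [hDdef, hTxy, norm_smul, Real.norm_eq_abs, abs_of_pos hkpos]
      rw [h1]; field_simp
    -- m3 = D
    have hms : S x ∈ segment ℝ q (T x) :=
      ⟨1-k, k, by linarith [hk.2], hkpos.le, by ring, hTx'.trans hSx.symm⟩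
    have hmsy : S y ∈ segment ℝ q (T y) :=
      ⟨1-k, k, by linarith [hk.2], hkpos.le, by ring, hTy'.trans hSy.symm⟩
    have e1 : ‖S x - S y‖ = D := by rw [hSx, hSy]
    have e2 : Metric.infDist (S x) (segment ℝ q (T x)) = 0 := Metric.infDist_zero_of_mem hms
    have e3 : Metric.infDist (S y) (segment ℝ q (T y)) = 0 := Metric.infDist_zero_of_mem hmsy
    have e4 : Metric.infDist (S x) (segment ℝ q (T y)) ≤ D := by
      have h := Metric.infDist_le_dist_of_mem (s := segment ℝ q (T y)) (x := S x)
        ⟨1-k, k, by linarith [hk.2], hkpos.le, by ring, hTy'⟩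
      rw [dist_eq_norm, hSx] at h
      rw [hSx, hDdef]
      exact h
    have e5 : Metric.infDist (S y) (segment ℝ q (T x)) ≤ D := by
      have h := Metric.infDist_le_dist_of_mem (s := segment ℝ q (T x)) (x := S y)
        ⟨1-k, k, by linarith [hk.2], hkpos.le, by ring, hTx'⟩
      rw [dist_eq_norm, norm_sub_rev, hSy] at h
      rw [hSy, hDdef]
      exact h
    have hm3eq : m3 S T q x y = max (max ‖S x - S y‖ (Metric.infDist (S x) (segment ℝ q (T x))))
        (max (Metric.infDist (S y) (segment ℝ q (T y)))
          ((Metric.infDist (S x) (segment ℝ q (T y)) +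
            Metric.infDist (S y) (segment ℝ q (T x))) / 2)) := rfl
    have hm3 : m3 S T q x y = D := by
      rw [hm3eq]
      apply le_antisymm
      · apply max_le (max_le e1.le (by rw [e2]; exact hD0.le))
        exact max_le (by rw [e3]; exact hD0.le) (by linarith)
      · exact le_trans e1.ge (le_trans (le_max_left _ _) (le_max_left _ _))
    have hcc := (hcontr x (Set.mem_union_left _ hx) y (Set.mem_union_left _ hy)).2 hy k hk
    rw [hm3, hnorm] at hcc
    have hβ0 : 0 < (1/k) * γ D := by
      have := hγ.1 D hD0
      positivity
    have hβle : (1/k) * γ D ≤ D / k := by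
      rw [div_eq_mul_inv D k, mul_comm D k⁻¹, one_div]
      exact mul_le_mul_of_nonneg_left (hγ.2.2 D hD0).le (by positivity)
    exact driver _ _ hβ0 hβle hcc
  -- the approximating sequence
  set k : ℕ → ℝ := fun n => ((n:ℝ)+1)/((n:ℝ)+2) with hkdef
  have hk01 : ∀ n, k n ∈ Ioo (0:ℝ) 1 := by
    intro n
    constructor
    · have h1 : (0:ℝ) < (n:ℝ)+1 := by positivity
      have h2 : (0:ℝ) < (n:ℝ)+2 := by positivity
      exact div_pos h1 h2
    · rw [hkdef]
      simp only
      rw [div_lt_one (by positivity)]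
      linarith
  have hex : ∀ n : ℕ, ∃ z, z ∈ P ∧ z = (1 - k n) • q + (k n) • T z ∧ S z = z := by
    intro n
    obtain ⟨z, hz, hST, hdiam⟩ := hJH (k n) ⟨(hk01 n).1.le, (hk01 n).2.le⟩
    have hd0 : Metric.diam (PCset S (fun w => (1 - k n) • q + (k n) • T w) P) = 0 :=
      Metric.diam_subsingleton (hsub (k n) (hk01 n))
    rw [hd0, zero_pow (by omega : n₀ ≠ 0)] at hdiam
    have hSz : S z = z := by
      have h := le_antisymm hdiam (norm_nonneg _)
      rwa [norm_sub_eq_zero_iff] at h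
    refine ⟨z, hz, ?_, hSz⟩
    have hST' : S z = (1 - k n) • q + (k n) • T z := hST
    exact hSz.symm.trans hST'
  choose x hxP hxeq hSxfix using hex
  -- algebra helper
  have alg : ∀ (t : ℝ) (a b : X), a = (1-t) • q + t • b → a - b = (1-t) • (q - b) := by
    intro t a b h
    rw [h]; module
  have hkval : ∀ n, 1 - k n = ((n:ℝ)+2)⁻¹ := by
    intro n
    rw [hkdef]
    have h2 : ((n:ℝ)+2) ≠ 0 := by positivity
    field_simp
    norm_num
  -- norm bound
  have hbound : ∀ n : ℕ, ‖x n - T (x n)‖ ≤ C * ((n:ℝ)+1)⁻¹ := by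
    intro n
    have hn2 : (0:ℝ) < (n:ℝ) + 2 := by positivity
    have hn1 : (0:ℝ) < (n:ℝ) + 1 := by positivity
    have h1 : x n - T (x n) = (1 - k n) • (q - T (x n)) := alg _ _ _ (hxeq n)
    have h2 : ‖x n - T (x n)‖ = ((n:ℝ)+2)⁻¹ * ‖q - T (x n)‖ := by
      rw [h1, hkval n, norm_smul, Real.norm_eq_abs, abs_of_pos (by positivity)]
    have h3 : ‖q - T (x n)‖ ≤ C + ‖x n - T (x n)‖ := by
      have htri := dist_triangle q (x n) (T (x n))
      rw [dist_eq_norm, dist_eq_norm, dist_eq_norm] at htri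
      have hqx : ‖q - x n‖ ≤ C := by
        have := hC hqP (hxP n)
        rwa [dist_eq_norm] at this
      linarith
    have hNs : ‖x n - T (x n)‖ * ((n:ℝ)+2) = ‖q - T (x n)‖ := by
      rw [h2]; field_simp
    rw [mul_comm C, inv_mul_eq_div, le_div_iff₀ hn1]
    have hr : ‖x n - T (x n)‖ * ((n:ℝ)+2) - ‖x n - T (x n)‖ = ‖x n - T (x n)‖ * ((n:ℝ)+1) := by
      ring
    linarith
  have hinv1 : Tendsto (fun n : ℕ => ((n:ℝ)+1)⁻¹) atTop (𝓝 0) := by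
    simpa [one_div] using tendsto_one_div_add_atTop_nhds_zero_nat (𝕜 := ℝ)
  have hinv2 : Tendsto (fun n : ℕ => ((n:ℝ)+2)⁻¹) atTop (𝓝 0) := by
    have h := (tendsto_one_div_add_atTop_nhds_zero_nat (𝕜 := ℝ)).comp (tendsto_add_atTop_nat 1)
    have heq : (fun n : ℕ => ((n:ℝ)+2)⁻¹) = (fun n : ℕ => 1/((↑(n+1):ℝ)+1)) := by
      funext n; push_cast; rw [one_div]; ring_nf
    rw [heq]
    exact h
  have hlim : Tendsto (fun n => ‖x n - T (x n)‖) atTop (𝓝 0) := by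
    apply squeeze_zero (fun n => norm_nonneg _) hbound
    simpa using hinv1.const_mul C
  obtain ⟨a, g, hg, hga⟩ := hTh x hxP hlim
  have haP : a ∈ P :=
    hPMcl.mem_of_tendsto hga (Filter.Eventually.of_forall fun j => hxP (g j))
  -- S a = a
  have hSa : S a = a := by
    have hxg : Tendsto (x ∘ g) atTop (𝓝[P] a) :=
      tendsto_nhdsWithin_of_tendsto_nhds_of_eventually_within _ hga
        (Filter.Eventually.of_forall fun j => hxP (g j))
    have h1 : Tendsto (fun j => S (x (g j))) atTop (𝓝 (S a)) :=
      (hScont a haP).tendsto.comp hxg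
    have h2 : Tendsto (fun j => S (x (g j))) atTop (𝓝 a) := by
      simpa [Function.comp_def, hSxfix] using hga
    exact tendsto_nhds_unique h1 h2
  -- convergence facts
  have h5 : Tendsto (fun j => ‖x (g j) - a‖) atTop (𝓝 0) := by
    have := tendsto_iff_norm_sub_tendsto_zero.mp hga
    simpa [Function.comp] using this
  have h4 : Tendsto (fun j => ‖x (g j) - T (x (g j))‖) atTop (𝓝 0) := by
    have := hlim.comp hg.tendsto_atTop
    simpa [Function.comp_def] using this
  have hTxg : Tendsto (fun j => T (x (g j))) atTop (𝓝 a) := by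
    rw [tendsto_iff_norm_sub_tendsto_zero]
    apply squeeze_zero (fun j => norm_nonneg _)
      (g := fun j => ‖x (g j) - T (x (g j))‖ + ‖x (g j) - a‖)
    · intro j
      have htri := dist_triangle (T (x (g j))) (x (g j)) a
      rw [dist_eq_norm, dist_eq_norm, dist_eq_norm,
        norm_sub_rev (T (x (g j))) (x (g j))] at htri
      simpa using htri
    · simpa using h4.add h5
  -- T a = a
  have hTa : T a = a := by
    by_contra hne
    set D := ‖a - T a‖ with hDdef
    have hD0 : 0 < D := by
      rw [hDdef, norm_pos_iff]
      exact sub_ne_zero.mpr (fun h => hne h.symm)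
    have hcD : Metric.infDist a (segment ℝ q (T a)) ≤ D := by
      have := Metric.infDist_le_dist_of_mem (x := a) (right_mem_segment ℝ q (T a))
      rwa [dist_eq_norm] at this
    have hγD : 0 < γ D := hγ.1 D hD0
    have hγDlt : γ D < D := hγ.2.2 D hD0
    set k0 : ℝ := (γ D / D + 1) / 2 with hk0def
    have hk0pos : 0 < k0 := by rw [hk0def]; positivity
    have hγDD : γ D / D < 1 := (div_lt_one hD0).mpr hγDlt
    have hk0lt : k0 < 1 := by rw [hk0def]; linarith
    have hbD : (1/k0) * γ D < D := by
      have h1 : γ D / D < k0 := by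
        rw [hk0def]
        have h0 : 0 < γ D / D := div_pos hγD hD0
        linarith
      have h2 : γ D < k0 * D := (div_lt_iff₀ hD0).mp h1
      rw [one_div, inv_mul_eq_div, div_lt_iff₀ hk0pos]
      linarith
    set b := (1/k0) * γ D with hbdef
    have hb0 : 0 < b := by rw [hbdef]; positivity
    by_cases hA : ∃ᶠ j in atTop, x (g j) = a
    · -- infinitely many xₙ equal a : then D is arbitrarily small
      have htk : Tendsto (fun j => (1 - k (g j)) * (C + D)) atTop (𝓝 0) := by
        have := (hinv2.comp hg.tendsto_atTop).mul_const (C + D)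
        simpa [Function.comp_def, hkval] using this
      have hev : ∀ᶠ j in atTop, (1 - k (g j)) * (C + D) < D :=
        Filter.Tendsto.eventually_lt_const hD0 htk
      obtain ⟨j, hja, hjlt⟩ := (hA.and_eventually hev).exists
      have heqj : a = (1 - k (g j)) • q + (k (g j)) • T a := by
        have h := hxeq (g j)
        rw [hja] at h
        exact h
      have heq2 : a - T a = (1 - k (g j)) • (q - T a) := alg _ _ _ heqj
      have hkj1 : k (g j) < 1 := (hk01 (g j)).2
      have hqTa : ‖q - T a‖ ≤ C + D := by
        have htri := dist_triangle q a (T a)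
        rw [dist_eq_norm, dist_eq_norm, dist_eq_norm] at htri
        have hqa : ‖q - a‖ ≤ C := by
          have := hC hqP haP
          rwa [dist_eq_norm] at this
        rw [← hDdef] at htri
        linarith
      have hDeq : D = (1 - k (g j)) * ‖q - T a‖ := by
        rw [hDdef, heq2, norm_smul, Real.norm_eq_abs, abs_of_pos (by linarith)]
      have : D ≤ (1 - k (g j)) * (C + D) :=
        hDeq.trans_le (mul_le_mul_of_nonneg_left hqTa (by linarith))
      linarith
    · -- eventually xₙ ≠ a : contraction contradiction
      rw [Filter.not_frequently] at hA
      have hE1 : ∀ᶠ j in atTop, ‖x (g j) - a‖ < D/2 :=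
        Filter.Tendsto.eventually_lt_const (by linarith) h5
      have htd : Tendsto (fun j => ‖T (x (g j)) - T a‖) atTop (𝓝 D) := by
        have h := (hTxg.sub_const (T a)).norm
        rwa [← hDdef] at h
      have hd0D : (b + D) / 2 < D := by linarith
      have hE2 : ∀ᶠ j in atTop, (b + D) / 2 < ‖T (x (g j)) - T a‖ :=
        Filter.Tendsto.eventually_const_lt hd0D htd
      obtain ⟨j, ⟨hjne, hj1⟩, hj2⟩ := ((hA.and hE1).and hE2).exists
      set z := x (g j) with hzdef
      have hzP : z ∈ P := hxP (g j)
      have hSz : S z = z := hSxfix (g j)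
      have hzseg : z ∈ segment ℝ q (T z) :=
        ⟨1 - k (g j), k (g j), by linarith [(hk01 (g j)).2], (hk01 (g j)).1.le, by ring,
          (hxeq (g j)).symm⟩
      have hza : z ≠ a := hjne
      have hzapos : 0 < ‖z - a‖ := by
        rw [norm_pos_iff]
        exact sub_ne_zero.mpr hza
      -- bound m3
      have i1 : Metric.infDist (S z) (segment ℝ q (T z)) = 0 := by
        rw [hSz]; exact Metric.infDist_zero_of_mem hzseg
      have i2 : Metric.infDist (S a) (segment ℝ q (T a)) ≤ D := by rw [hSa]; exact hcD
      have i3 : Metric.infDist (S z) (segment ℝ q (T a)) ≤ D + ‖z - a‖ := by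
        rw [hSz]
        have h := Metric.infDist_le_infDist_add_dist (x := z) (y := a)
          (s := segment ℝ q (T a))
        rw [dist_eq_norm] at h
        linarith
      have i4 : Metric.infDist (S a) (segment ℝ q (T z)) ≤ ‖z - a‖ := by
        rw [hSa]
        have h := Metric.infDist_le_infDist_add_dist (x := a) (y := z)
          (s := segment ℝ q (T z))
        rw [dist_eq_norm, Metric.infDist_zero_of_mem hzseg, norm_sub_rev] at h
        linarith
      have e1 : ‖S z - S a‖ = ‖z - a‖ := by rw [hSz, hSa]
      have hm3eq : m3 S T q z a = max (max ‖S z - S a‖ (Metric.infDist (S z) (segment ℝ q (T z))))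
          (max (Metric.infDist (S a) (segment ℝ q (T a)))
            ((Metric.infDist (S z) (segment ℝ q (T a)) +
              Metric.infDist (S a) (segment ℝ q (T z))) / 2)) := rfl
      have hmpos : 0 < m3 S T q z a := by
        rw [hm3eq]
        calc (0:ℝ) < ‖z - a‖ := hzapos
          _ = ‖S z - S a‖ := e1.symm
          _ ≤ _ := le_trans (le_max_left _ _) (le_max_left _ _)
      have hmD : m3 S T q z a ≤ D := by
        rw [hm3eq]
        apply max_le
        · apply max_le
          · rw [e1]; linarith
          · rw [i1]; exact hD0.le
        · exact max_le i2 (by linarith)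
      -- contraction
      have hγm : γ (m3 S T q z a) ≤ γ D := hγ.2.1 (Set.mem_Ioi.mpr hmpos) (Set.mem_Ioi.mpr hD0) hmD
      have hβ0 : 0 < (1/k0) * γ (m3 S T q z a) := by
        have := hγ.1 _ hmpos
        positivity
      have hβle : (1/k0) * γ (m3 S T q z a) ≤ ‖T z - T a‖ := by
        have h1 : (1/k0) * γ (m3 S T q z a) ≤ b := by
          rw [hbdef]
          exact mul_le_mul_of_nonneg_left hγm (by positivity)
        have h2 : b ≤ (b + D) / 2 := by linarith
        linarith [hj2]
      have hcc := (hcontr z (Set.mem_union_left _ hzP) a (Set.mem_union_left _ haP)).2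
        haP k0 ⟨hk0pos, hk0lt⟩
      exact driver _ _ hβ0 hβle hcc
  exact ⟨a, haP, hSa, hTa⟩

end
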